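/- arXiv:1408.5495 — 3 statements merged into one kernel-verified Lean document; each statement's English description precedes it below -/
import Mathlib

section
/- For every m ≥ 0 the word A_m with its last letter removed is a palindrome; consequently, for every m ≥ 1 and i ∈ {1,2} the envelope word E_{m,i} is a palindrome. -/
namespace PD

/-- The period-doubling substitution on the alphabet `Bool`,
where `false` stands for the letter `a` and `true` for the letter `b`:
`σ(a) = ab`, `σ(b) = aa`. -/
def sub : Bool → List Bool
  | false => [false, true]
  | true  => [false, false]

/-- The substitution applied to a finite word. -/
def subW (w : List Bool) : List Bool := w.flatMap sub

/-- `A m = σ^m(a)`. -/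
def A (m : ℕ) : List Bool := subW^[m] [false]

/-- `B m = σ^m(b)`. -/
def B (m : ℕ) : List Bool := subW^[m] [true]

/-- The doubling sequence `D∞` (0-indexed: `D n` is the `(n+1)`-th letter),
the fixed point of `σ` beginning with `a`; `A m` is a prefix of `A (m+1)`,
and `A (n+1)` has length `2^(n+1) > n`. -/
def D (n : ℕ) : Bool := (A (n + 1)).getD n false

/-- `δ m`, the last letter of `A m`. -/
def delta (m : ℕ) : Bool := (A m).getLastD false

/-- The envelope words (`i ∈ {1,2}`): `E m 1 = A m` minus its last letter,
`E m 2 = A (m-1) ++ (A m` minus its last letter `)`. -/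
def E (m i : ℕ) : List Bool :=
  if i = 1 then (A m).dropLast else A (m - 1) ++ (A m).dropLast

/-- `w` occurs at the (1-indexed) position `j` in the finite word `τ`. -/
def OccursIn (w τ : List Bool) (j : ℕ) : Prop :=
  1 ≤ j ∧ (τ.drop (j - 1)).take w.length = w

/-- `w` occurs at the (1-indexed) position `j` in the doubling sequence. -/
def OccursD (w : List Bool) (j : ℕ) : Prop :=
  1 ≤ j ∧ ∀ k < w.length, D (j - 1 + k) = w.getD k false

/-- `w` is a factor of the doubling sequence. -/
def FactorD (w : List Bool) : Prop := ∃ j, OccursD w j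

/-- `L w p`: the (1-indexed) starting position of the `p`-th occurrence of `w`
in the doubling sequence, occurrences being ordered by starting position.
(Each factor occurs infinitely often, so `Nat.nth` enumerates all occurrences
in increasing order.) -/
noncomputable def L (w : List Bool) (p : ℕ) : ℕ := Nat.nth (OccursD w) (p - 1)

/-- The strict total order on envelope words:
`E m₁ i₁ ⊏ E m₂ i₂` iff `m₁ < m₂`, or `m₁ = m₂` and `i₁ < i₂`. -/
def EnvLt (m₁ i₁ m₂ i₂ : ℕ) : Prop := m₁ < m₂ ∨ (m₁ = m₂ ∧ i₁ < i₂)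

/-- `Env(w) = E m i`: the envelope word `E m i` is the `⊏`-minimal envelope
word containing `w` as a factor. -/
def IsEnv (w : List Bool) (m i : ℕ) : Prop :=
  1 ≤ m ∧ (i = 1 ∨ i = 2) ∧ w <:+: E m i ∧
    ∀ m' i', 1 ≤ m' → (i' = 1 ∨ i' = 2) → EnvLt m' i' m i → ¬ w <:+: E m' i'

/-- The substitution `φ₁(a) = a`, `φ₁(b) = bb`. -/
def phi1 : Bool → List Bool
  | false => [false]
  | true  => [true, true]

/-- `Θ₁ = φ₁(D∞)` (0-indexed): `φ₁(A (n+1))` is a prefix of `Θ₁` of length `> n`. -/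
def Theta1 (n : ℕ) : Bool := ((A (n + 1)).flatMap phi1).getD n false

/-- The substitution `φ₂(a) = ab`, `φ₂(b) = acac`, over the alphabet `Fin 3`
where `0` stands for `a`, `1` for `b` and `2` for `c`. -/
def phi2 : Bool → List (Fin 3)
  | false => [0, 1]
  | true  => [0, 2, 0, 2]

/-- `Θ₂ = φ₂(D∞)` (0-indexed). -/
def Theta2 (n : ℕ) : Fin 3 := ((A (n + 1)).flatMap phi2).getD n 0

/-- `N₁(x,p)`: the number of letters `x` among the first `p` letters of `Θ₁`. -/
def N1 (x : Bool) (p : ℕ) : ℕ := ((List.range p).map Theta1).count x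

/-- `N₂(x,p)`: the number of letters `x` among the first `p` letters of `Θ₂`. -/
def N2 (x : Fin 3) (p : ℕ) : ℕ := ((List.range p).map Theta2).count x

end PD

open PD

lemma subW_append (u v : List Bool) : subW (u ++ v) = subW u ++ subW v := by
  simp [subW]

lemma subW_singleton (x : Bool) : subW [x] = [false, !x] := by
  cases x <;> rfl

lemma A_succ (m : ℕ) : A (m + 1) = subW (A m) := by
  simp [A, Function.iterate_succ_apply']

lemma key (m : ℕ) : ∃ p x, A m = p ++ [x] ∧ A (m + 1) = (p ++ [x]) ++ (p ++ [!x]) := by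
  induction m with
  | zero =>
    refine ⟨[], false, rfl, ?_⟩
    rfl
  | succ n ih =>
    obtain ⟨p, x, h1, h2⟩ := ih
    refine ⟨subW p ++ [false], !x, ?_, ?_⟩
    · rw [A_succ, h1, subW_append, subW_singleton]
      simp
    · rw [A_succ (n+1), h2, subW_append, subW_append, subW_append,
        subW_singleton, subW_singleton]
      simp

lemma pal_mid {p : List Bool} (hp : p.Palindrome) (x : Bool) :
    (p ++ [x] ++ p).Palindrome := by
  apply List.Palindrome.of_reverse_eq
  simp [List.reverse_append, hp.reverse_eq]

lemma pal_mid2 {p : List Bool} (hp : p.Palindrome) (x : Bool) :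
    (p ++ [x] ++ p ++ [x] ++ p).Palindrome := by
  apply List.Palindrome.of_reverse_eq
  simp [List.reverse_append, hp.reverse_eq]

lemma dropLast_pal : ∀ m : ℕ, List.Palindrome (A m).dropLast := by
  intro m
  induction m with
  | zero => exact List.Palindrome.nil
  | succ n ih =>
    obtain ⟨p, x, h1, h2⟩ := key n
    have hp : p.Palindrome := by
      have : (A n).dropLast = p := by rw [h1]; simp
      rwa [this] at ih
    rw [h2, List.append_assoc, ← List.append_assoc p, ← List.append_assoc]
    rw [show (p ++ [x] ++ p ++ [!x]) = (p ++ [x] ++ p) ++ [!x] by simp,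
      List.dropLast_concat]
    exact pal_mid hp x

theorem doubling_palindromes' :
    (∀ m : ℕ, List.Palindrome (A m).dropLast) ∧
      (∀ m : ℕ, 1 ≤ m → ∀ i : ℕ, i = 1 ∨ i = 2 → List.Palindrome (E m i)) := by
  refine ⟨dropLast_pal, ?_⟩
  intro m hm i hi
  rcases hi with rfl | rfl
  · simpa [E] using dropLast_pal m
  · obtain ⟨k, rfl⟩ := Nat.exists_eq_add_of_le hm
    obtain ⟨p, x, h1, h2⟩ := key k
    have hp : p.Palindrome := by
      have : (A k).dropLast = p := by rw [h1]; simp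
      rw [← this]; exact dropLast_pal k
    have hd : (A (k + 1)).dropLast = p ++ [x] ++ p := by
      rw [h2, show (p ++ [x]) ++ (p ++ [!x]) = (p ++ [x] ++ p) ++ [!x] by simp,
        List.dropLast_concat]
    simp only [E, Nat.add_sub_cancel]
    rw [show (1 + k : ℕ) = k + 1 by ring] at *
    rw [if_neg (by norm_num), Nat.add_sub_cancel, hd, h1]
    have := pal_mid2 hp x
    simpa using this


/-- For every `m ≥ 0` the word `A m` with its last letter removed is a palindrome;
consequently every envelope word `E m i` (`m ≥ 1`, `i ∈ {1,2}`) is a palindrome. -/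
theorem doubling_palindromes :
    (∀ m : ℕ, List.Palindrome (A m).dropLast) ∧
      (∀ m : ℕ, 1 ≤ m → ∀ i : ℕ, i = 1 ∨ i = 2 → List.Palindrome (E m i)) := by
  exact doubling_palindromes'
end

section
/- (The gap sequence of E_{m,1} is Θ₁.) For every m ≥ 1 and every p ≥ 1: L(E_{m,1},p+1) − L(E_{m,1},p) = 2^m if Θ₁[p] = a, and L(E_{m,1},p+1) − L(E_{m,1},p) = 2^{m−1} if Θ₁[p] = b. Equivalently, the p-th gap between consecutive occurrences of E_{m,1} equals δ_m when Θ₁[p] = a, and the (p)-th and (p+1)-th occurrences overlap in 2^{m−1} − 1 letters when Θ₁[p] = b. -/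
namespace PD

/-! ### Basic structure of `A`, `B` -/

lemma subW_append (u v : List Bool) : subW (u ++ v) = subW u ++ subW v :=
  List.flatMap_append ..

lemma subW_cons (x : Bool) (w : List Bool) : subW (x :: w) = sub x ++ subW w := by
  simp [subW]

lemma subW_iter_append (s : ℕ) (u v : List Bool) :
    subW^[s] (u ++ v) = subW^[s] u ++ subW^[s] v := by
  induction s generalizing u v with
  | zero => rfl
  | succ s ih => simp only [Function.iterate_succ_apply, subW_append, ih]

lemma length_sub (x : Bool) : (sub x).length = 2 := by cases x <;> rfl

lemma length_subW (w : List Bool) : (subW w).length = 2 * w.length := by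
  induction w with
  | nil => rfl
  | cons x w ih =>
      rw [subW_cons, List.length_append, ih, length_sub, List.length_cons]; ring

lemma length_subW_iter (s : ℕ) (w : List Bool) : (subW^[s] w).length = 2 ^ s * w.length := by
  induction s generalizing w with
  | zero => simp
  | succ s ih => rw [Function.iterate_succ_apply, ih, length_subW, pow_succ]; ring

lemma length_A (m : ℕ) : (A m).length = 2 ^ m := by
  rw [A, length_subW_iter]; simp

lemma A_succ (m : ℕ) : A (m + 1) = A m ++ B m := by
  rw [A, Function.iterate_succ_apply, show subW [false] = [false] ++ [true] by rfl,
    subW_iter_append]; rfl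

lemma B_succ (m : ℕ) : B (m + 1) = A m ++ A m := by
  rw [B, Function.iterate_succ_apply, show subW [true] = [false] ++ [false] by rfl,
    subW_iter_append]; rfl

lemma A_ne_nil (m : ℕ) : A m ≠ [] := by
  intro hn
  have h := length_A m
  rw [hn] at h
  have h1 : (1 : ℕ) ≤ 2 ^ m := Nat.one_le_two_pow
  simp at h
  omega

lemma A_eq (m : ℕ) : (A m).dropLast ++ [delta m] = A m := by
  have h := A_ne_nil m
  rw [delta, List.getLastD_eq_getLast?, List.getLast?_eq_getLast h]
  exact List.dropLast_append_getLast h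

lemma B_eq (m : ℕ) : B m = (A m).dropLast ++ [!delta m] := by
  induction m with
  | zero => rfl
  | succ m ih =>
      have h1 : A (m + 1) = (A m ++ (A m).dropLast) ++ [!delta m] := by
        rw [A_succ, ih, ← List.append_assoc]
      have hd : delta (m + 1) = !delta m := by
        rw [show delta (m + 1) = (A (m + 1)).getLastD false from rfl, h1]
        simp
      rw [B_succ, h1, List.dropLast_concat, hd, Bool.not_not, List.append_assoc, A_eq]

lemma delta_succ (m : ℕ) : delta (m + 1) = !delta m := by
  have h1 : A (m + 1) = (A m ++ (A m).dropLast) ++ [!delta m] := by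
    rw [A_succ, B_eq, ← List.append_assoc]
  rw [show delta (m + 1) = (A (m + 1)).getLastD false from rfl, h1]
  simp

lemma dropLast_A_succ (m : ℕ) : (A (m + 1)).dropLast = A m ++ (A m).dropLast := by
  have h1 : A (m + 1) = (A m ++ (A m).dropLast) ++ [!delta m] := by
    rw [A_succ, B_eq, ← List.append_assoc]
  rw [h1, List.dropLast_concat]

lemma A_prefix : ∀ {m m'}, m ≤ m' → A m <+: A m' := by
  intro m m' h
  induction h with
  | refl => exact List.prefix_rfl
  | step _ ih => exact ih.trans ⟨B _, (A_succ _).symm⟩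

lemma getD_of_prefix {u v : List Bool} (h : u <+: v) {i : ℕ} (hi : i < u.length) (d : Bool) :
    v.getD i d = u.getD i d := by
  obtain ⟨w, rfl⟩ := h
  exact List.getD_append u w d i hi

lemma D_eq_getD_A (M n : ℕ) (h : n < 2 ^ M) : (A M).getD n false = D n := by
  rcases le_total M (n + 1) with hM | hM
  · rw [show D n = (A (n + 1)).getD n false from rfl,
      getD_of_prefix (A_prefix hM) (by rw [length_A]; exact h)]
  · rw [show D n = (A (n + 1)).getD n false from rfl]
    exact getD_of_prefix (A_prefix hM)
      (by rw [length_A]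
          exact (Nat.lt_two_pow_self (n := n)).trans_le (Nat.pow_le_pow_right (by norm_num) (Nat.le_succ n)))
      false

/-! ### Recursions for `D` -/

lemma subW_getD_even (w : List Bool) (t : ℕ) : (subW w).getD (2 * t) false = false := by
  induction w generalizing t with
  | nil => simp [subW]
  | cons x w ih =>
      rw [subW_cons]
      cases t with
      | zero => cases x <;> rfl
      | succ t =>
          rw [List.getD_append_right _ _ _ _ (by rw [length_sub]; omega)]
          have h2 : 2 * (t + 1) - (sub x).length = 2 * t := by rw [length_sub]; omega
          rw [h2]; exact ih t

lemma subW_getD_odd (w : List Bool) (t : ℕ) (ht : t < w.length) :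
    (subW w).getD (2 * t + 1) false = !(w.getD t false) := by
  induction w generalizing t with
  | nil => simp at ht
  | cons x w ih =>
      rw [subW_cons]
      cases t with
      | zero => cases x <;> rfl
      | succ t =>
          rw [List.getD_append_right _ _ _ _ (by rw [length_sub]; omega)]
          have h2 : 2 * (t + 1) + 1 - (sub x).length = 2 * t + 1 := by rw [length_sub]; omega
          rw [h2, ih t (by simp at ht; omega)]
          rfl

lemma D_even (t : ℕ) : D (2 * t) = false := by
  rw [show D (2 * t) = (A (2 * t + 1)).getD (2 * t) false from rfl, A,
    Function.iterate_succ_apply']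
  exact subW_getD_even _ t

lemma D_odd (t : ℕ) : D (2 * t + 1) = !(D t) := by
  have h1 : t < (A (2 * t + 1)).length := by
    rw [length_A]
    calc t < 2 ^ t := Nat.lt_two_pow_self (n := t)
      _ ≤ 2 ^ (2 * t + 1) := Nat.pow_le_pow_right (by norm_num) (by omega)
  rw [show D (2 * t + 1) = (A (2 * t + 2)).getD (2 * t + 1) false from rfl,
    show A (2 * t + 2) = subW (A (2 * t + 1)) from Function.iterate_succ_apply' subW _ _,
    subW_getD_odd _ t h1, D_eq_getD_A (2 * t + 1) t (by rw [← length_A (2 * t + 1)]; exact h1)]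

/-! ### The block structure of `D` -/

lemma sub_eq (x : Bool) : sub x = [false] ++ [!x] := by cases x <;> rfl

lemma block (s : ℕ) : ∀ t k, k < 2 ^ s → D (2 ^ s * t + k) = (subW^[s] [D t]).getD k false := by
  induction s with
  | zero =>
      intro t k hk
      have : k = 0 := by omega
      subst this
      simp
  | succ s ih =>
      intro t k hk
      have hsub : subW^[s + 1] [D t] = A s ++ subW^[s] [!(D t)] := by
        rw [Function.iterate_succ_apply, show subW [D t] = sub (D t) by simp [subW],
          sub_eq, subW_iter_append]
        rfl
      rw [hsub]
      have h2 : 2 ^ (s + 1) = 2 * 2 ^ s := by rw [pow_succ]; ring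
      rcases lt_or_ge k (2 ^ s) with h | h
      · have e : 2 ^ (s + 1) * t + k = 2 ^ s * (2 * t) + k := by rw [pow_succ]; ring
        rw [e, ih (2 * t) k h, D_even,
          List.getD_append _ _ _ _ (by rw [length_A]; exact h)]
        rfl
      · obtain ⟨k', rfl⟩ : ∃ k', k = 2 ^ s + k' := ⟨k - 2 ^ s, by omega⟩
        have hk' : k' < 2 ^ s := by omega
        have e : 2 ^ (s + 1) * t + (2 ^ s + k') = 2 ^ s * (2 * t + 1) + k' := by
          rw [pow_succ]; ring
        rw [e, ih (2 * t + 1) k' hk', D_odd,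
          List.getD_append_right _ _ _ _ (by rw [length_A]; omega)]
        congr 1
        rw [length_A]
        omega

lemma getD_last_subW_iter (s : ℕ) (x : Bool) :
    (subW^[s] [x]).getD (2 ^ s - 1) false = (if x = true then !delta s else delta s) := by
  have hlen : (A s).dropLast.length = 2 ^ s - 1 := by
    rw [List.length_dropLast, length_A]
  cases x
  · show (A s).getD (2 ^ s - 1) false = delta s
    conv_lhs => rw [← A_eq s]
    rw [List.getD_append_right _ _ _ _ hlen.le, hlen]
    simp
  · show (B s).getD (2 ^ s - 1) false = !delta s
    rw [B_eq, List.getD_append_right _ _ _ _ hlen.le, hlen]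
    simp

lemma getD_A_last (s : ℕ) : (A s).getD (2 ^ s - 1) false = delta s := by
  have := getD_last_subW_iter s false
  simpa [A] using this

lemma getD_A_dropLast (s k : ℕ) (h : k < 2 ^ s - 1) :
    (A s).dropLast.getD k false = (A s).getD k false := by
  conv_rhs => rw [← A_eq s]
  rw [List.getD_append _ _ _ _ (by rw [List.length_dropLast, length_A]; exact h)]

/-! ### Envelope word structure -/

lemma E_def (m : ℕ) : E m 1 = (A m).dropLast := rfl

lemma E_eq (s : ℕ) : E (s + 1) 1 = A s ++ (A s).dropLast := by
  rw [E_def]; exact dropLast_A_succ s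

lemma length_E (s : ℕ) : (E (s + 1) 1).length = 2 ^ (s + 1) - 1 := by
  have h2 : 2 ^ (s + 1) = 2 * 2 ^ s := by rw [pow_succ]; ring
  have h1 : (1 : ℕ) ≤ 2 ^ s := Nat.one_le_two_pow
  rw [E_eq, List.length_append, List.length_dropLast, length_A]
  omega

/-! ### Occurrences of `E m 1` -/

def Occ0 (w : List Bool) (n : ℕ) : Prop := ∀ k < w.length, D (n + k) = w.getD k false

lemma occ0_of_aligned (s t : ℕ) (ht : D t = false) : Occ0 (E (s + 1) 1) (2 ^ s * t) := by
  intro k hk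
  rw [length_E] at hk
  have h2 : 2 ^ (s + 1) = 2 * 2 ^ s := by rw [pow_succ]; ring
  have h1 : (1 : ℕ) ≤ 2 ^ s := Nat.one_le_two_pow
  rcases lt_or_ge k (2 ^ s) with h | h
  · rw [block s t k h, ht, E_eq, List.getD_append _ _ _ _ (by rw [length_A]; exact h)]
    rfl
  · obtain ⟨k', rfl⟩ : ∃ k', k = 2 ^ s + k' := ⟨k - 2 ^ s, by omega⟩
    have hk' : k' < 2 ^ s - 1 := by omega
    have e : 2 ^ s * t + (2 ^ s + k') = 2 ^ s * (t + 1) + k' := by ring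
    rw [e, block s (t + 1) k' (by omega), E_eq,
      List.getD_append_right _ _ _ _ (by rw [length_A]; omega)]
    have e2 : 2 ^ s + k' - (A s).length = k' := by rw [length_A]; omega
    rw [e2]
    cases hD : D (t + 1)
    · show (A s).getD k' false = _
      rw [getD_A_dropLast s k' hk']
    · show (B s).getD k' false = _
      rw [B_eq, List.getD_append _ _ _ _ (by rw [List.length_dropLast, length_A]; exact hk')]

lemma occ0_aligned (m : ℕ) (hm : 1 ≤ m) :
    ∀ n, Occ0 (E m 1) n → ∃ t, D t = false ∧ n = 2 ^ (m - 1) * t := by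
  induction m, hm using Nat.le_induction with
  | base =>
      intro n h
      have hE : E 1 1 = [false] := rfl
      have := h 0 (by rw [hE]; norm_num)
      rw [hE] at this
      exact ⟨n, by simpa using this, by simp⟩
  | succ m hm ih =>
      intro n h
      have h2 : 2 ^ (m + 1) = 2 * 2 ^ m := by rw [pow_succ]; ring
      have h1 : (1 : ℕ) ≤ 2 ^ m := Nat.one_le_two_pow
      have hlen : (E (m + 1) 1).length = 2 ^ (m + 1) - 1 := length_E m
      -- prefix occurrence of E m 1
      have hpre : Occ0 (E m 1) n := by
        intro k hk
        rw [E_def, List.length_dropLast, length_A] at hk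
        have hk2 : k < (E (m + 1) 1).length := by rw [hlen]; omega
        have := h k hk2
        rw [E_eq, List.getD_append _ _ _ _ (by rw [length_A]; omega)] at this
        rw [E_def, getD_A_dropLast m k (by omega)]
        exact this
      obtain ⟨u, hu, hn⟩ := ih n hpre
      obtain ⟨s, rfl⟩ : ∃ s, m = s + 1 := ⟨m - 1, by omega⟩
      rw [Nat.add_sub_cancel] at hn
      -- the middle letter
      have hmid : D (n + (2 ^ (s + 1) - 1)) = delta (s + 1) := by
        have hk2 : 2 ^ (s + 1) - 1 < (E (s + 1 + 1) 1).length := by rw [hlen]; omega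
        have := h (2 ^ (s + 1) - 1) hk2
        rw [E_eq, List.getD_append _ _ _ _ (by rw [length_A]; omega), getD_A_last] at this
        exact this
      have e : n + (2 ^ (s + 1) - 1) = 2 ^ s * (u + 1) + (2 ^ s - 1) := by
        have e1 : 2 ^ s * (u + 1) = 2 ^ s * u + 2 ^ s := by ring
        have h2s : 2 ^ (s + 1) = 2 * 2 ^ s := by rw [pow_succ]; ring
        have h1s : (1 : ℕ) ≤ 2 ^ s := Nat.one_le_two_pow
        omega
      rw [e, block s (u + 1) (2 ^ s - 1) (by have := Nat.one_le_two_pow (n := s); omega),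
        getD_last_subW_iter, delta_succ] at hmid
      have hDu1 : D (u + 1) = true := by
        by_contra hc
        rw [eq_false_of_ne_true hc, if_neg (by simp)] at hmid
        cases hds : delta s <;> rw [hds] at hmid <;> simp at hmid
      -- u is even
      obtain ⟨v, rfl⟩ : ∃ v, u = 2 * v := by
        rcases Nat.even_or_odd u with ⟨v, hv⟩ | ⟨v, hv⟩
        · exact ⟨v, by omega⟩
        · exfalso
          have : u + 1 = 2 * (v + 1) := by omega
          rw [this, D_even] at hDu1
          exact absurd hDu1 (by simp)
      have hDv : D v = false := by
        rw [D_odd] at hDu1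
        simpa using hDu1
      refine ⟨v, hDv, ?_⟩
      rw [Nat.add_sub_cancel, hn, pow_succ]
      ring

lemma occursD_iff (s : ℕ) (j : ℕ) :
    OccursD (E (s + 1) 1) j ↔ ∃ t, D t = false ∧ j = 2 ^ s * t + 1 := by
  constructor
  · rintro ⟨hj, h⟩
    obtain ⟨t, ht, hn⟩ := occ0_aligned (s + 1) (by omega) (j - 1) h
    rw [Nat.add_sub_cancel] at hn
    exact ⟨t, ht, by omega⟩
  · rintro ⟨t, ht, rfl⟩
    refine ⟨by omega, ?_⟩
    intro k hk
    have := occ0_of_aligned s t ht k hk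
    rw [Nat.add_sub_cancel]
    exact this

/-! ### Counting occurrences: the `Z` side -/

lemma Z_infinite : {t | D t = false}.Infinite :=
  Set.infinite_of_injective_forall_mem (f := fun t => 2 * t)
    (fun a b hab => by simp only [] at hab; omega) (fun t => D_even t)

def NB (j : ℕ) : ℕ := ((List.range j).map D).countP (fun x => x = true)

def cIdx (j : ℕ) : ℕ := j + NB j

lemma NB_succ (j : ℕ) : NB (j + 1) = NB j + (if D j = true then 1 else 0) := by
  cases hD : D j <;> simp [NB, List.range_succ, hD]

lemma cIdx_succ (j : ℕ) : cIdx (j + 1) = cIdx j + (if D j = true then 2 else 1) := by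
  rw [cIdx, cIdx, NB_succ]
  by_cases h : D j = true <;> simp [h] <;> omega

lemma NB_le (j : ℕ) : NB j ≤ j := by
  have h := List.countP_le_length (l := (List.range j).map D) (p := fun x => x = true)
  simp only [List.length_map, List.length_range] at h
  exact h

lemma cIdx_cover : ∀ q, ∃ j, q = cIdx j ∨ (q = cIdx j + 1 ∧ D j = true) := by
  intro q
  induction q with
  | zero => exact ⟨0, Or.inl rfl⟩
  | succ q ih =>
      obtain ⟨j, h | ⟨h, hD⟩⟩ := ih
      · cases hDj : D j
        · exact ⟨j + 1, Or.inl (by rw [cIdx_succ, hDj]; simp [h])⟩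
        · exact ⟨j, Or.inr ⟨by omega, hDj⟩⟩
      · exact ⟨j + 1, Or.inl (by rw [cIdx_succ, hD]; simp; omega)⟩

lemma countZ_even (j : ℕ) : Nat.count (fun t => D t = false) (2 * j) = cIdx j := by
  induction j with
  | zero => rfl
  | succ j ih =>
      have e : 2 * (j + 1) = 2 * j + 1 + 1 := by ring
      rw [e, Nat.count_succ, Nat.count_succ, ih, cIdx_succ]
      cases hD : D j <;> simp [D_even, D_odd, hD]

lemma nthZ_even (j : ℕ) : Nat.nth (fun t => D t = false) (cIdx j) = 2 * j := by
  rw [← countZ_even]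
  exact Nat.nth_count (D_even j)

lemma nthZ_odd (j : ℕ) (hD : D j = true) :
    Nat.nth (fun t => D t = false) (cIdx j + 1) = 2 * j + 1 := by
  have h1 : Nat.count (fun t => D t = false) (2 * j + 1) = cIdx j + 1 := by
    rw [Nat.count_succ, countZ_even]
    simp [D_even]
  rw [← h1]
  exact Nat.nth_count (by rw [D_odd, hD]; rfl)

/-! ### `Theta1` values -/

lemma prefix_flatMap {u v : List Bool} (h : u <+: v) :
    u.flatMap phi1 <+: v.flatMap phi1 := by
  obtain ⟨w, rfl⟩ := h
  exact ⟨w.flatMap phi1, (List.flatMap_append ..).symm⟩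

lemma le_length_flatMap (w : List Bool) : w.length ≤ (w.flatMap phi1).length := by
  induction w with
  | nil => simp
  | cons x w ih =>
      rw [List.flatMap_cons, List.length_append, List.length_cons]
      have : 1 ≤ (phi1 x).length := by cases x <;> simp [phi1]
      omega

lemma theta_eq (M n : ℕ) (h : n < 2 ^ M) :
    Theta1 n = ((A M).flatMap phi1).getD n false := by
  rcases le_total M (n + 1) with hM | hM
  · rw [show Theta1 n = ((A (n + 1)).flatMap phi1).getD n false from rfl,
      getD_of_prefix (prefix_flatMap (A_prefix hM))
        (lt_of_lt_of_le (by rw [length_A]; exact h) (le_length_flatMap _))]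
  · rw [show Theta1 n = ((A (n + 1)).flatMap phi1).getD n false from rfl]
    exact (getD_of_prefix (prefix_flatMap (A_prefix hM))
      (lt_of_lt_of_le
        (by rw [length_A]
            exact (Nat.lt_two_pow_self (n := n)).trans_le
              (Nat.pow_le_pow_right (by norm_num) (Nat.le_succ n)))
        (le_length_flatMap _)) false).symm

def cwf (w : List Bool) (j : ℕ) : ℕ := j + (w.take j).countP (fun x => x = true)

lemma flat_getD (w : List Bool) : ∀ j, j < w.length →
    (w.flatMap phi1).getD (cwf w j) false = w.getD j false ∧
      (w.getD j false = true → (w.flatMap phi1).getD (cwf w j + 1) false = true) := by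
  induction w with
  | nil => intro j h; simp at h
  | cons x w ih =>
      intro j hj
      cases j with
      | zero =>
          have hcw : cwf (x :: w) 0 = 0 := rfl
          rw [hcw, List.flatMap_cons]
          constructor
          · cases x <;> rfl
          · cases x
            · intro h; simp at h
            · intro _; rfl
      | succ j =>
          have hcw : cwf (x :: w) (j + 1) = (phi1 x).length + cwf w j := by
            cases x <;> simp [cwf, phi1, List.countP_cons] <;> omega
          rw [List.flatMap_cons, hcw]
          have hlen : (phi1 x).length ≤ (phi1 x).length + cwf w j := by omega
          rw [List.getD_append_right _ _ _ _ hlen,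
            List.getD_append_right _ _ _ _ (by omega)]
          have e1 : (phi1 x).length + cwf w j - (phi1 x).length = cwf w j := by omega
          have e2 : (phi1 x).length + cwf w j + 1 - (phi1 x).length = cwf w j + 1 := by omega
          rw [e1, e2]
          have := ih j (by simp at hj; omega)
          simpa using this

lemma take_A (M j : ℕ) (h : j ≤ 2 ^ M) : (A M).take j = (List.range j).map D := by
  induction j with
  | zero => simp
  | succ j ih =>
      rw [List.take_succ, ih (by omega), List.range_succ, List.map_append]
      congr 1
      have hj : j < (A M).length := by rw [length_A]; omega
      rw [List.getElem?_eq_getElem hj]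
      have : (A M)[j] = D j := by
        rw [← D_eq_getD_A M j (by omega)]
        exact (List.getD_eq_getElem _ _ hj).symm
      simp [this]

lemma theta_c (j : ℕ) :
    Theta1 (cIdx j) = D j ∧ (D j = true → Theta1 (cIdx j + 1) = true) := by
  set M := 2 * j + 2 with hM
  have hNB : NB j ≤ j := NB_le j
  have hj2 : j < 2 ^ M := by
    calc j < 2 ^ j := Nat.lt_two_pow_self (n := j)
      _ ≤ 2 ^ M := Nat.pow_le_pow_right (by norm_num) (by omega)
  have hc2 : cIdx j + 1 < 2 ^ M := by
    have h1 : cIdx j + 1 ≤ 2 * j + 1 := by rw [cIdx]; omega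
    have h2 : 2 * j + 1 < 2 ^ (2 * j + 1) := Nat.lt_two_pow_self (n := 2 * j + 1)
    have h3 : 2 ^ (2 * j + 1) ≤ 2 ^ M := Nat.pow_le_pow_right (by norm_num) (by omega)
    omega
  have hcwf : cwf (A M) j = cIdx j := by
    rw [cwf, take_A M j (by omega), cIdx, NB]
  have hjlen : j < (A M).length := by rw [length_A]; exact hj2
  obtain ⟨h1, h2⟩ := flat_getD (A M) j hjlen
  constructor
  · rw [theta_eq M (cIdx j) (by omega), ← hcwf, h1]
    exact D_eq_getD_A M j hj2
  · intro hD
    rw [theta_eq M (cIdx j + 1) hc2, ← hcwf]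
    exact h2 (by rw [D_eq_getD_A M j hj2]; exact hD)

/-! ### The `nth` computation for occurrence positions -/

lemma nthQ (s : ℕ) (n : ℕ) :
    Nat.nth (fun j => ∃ t, D t = false ∧ j = 2 ^ s * t + 1) n =
      2 ^ s * Nat.nth (fun t => D t = false) n + 1 := by
  classical
  set Z : ℕ → Prop := fun t => D t = false with hZ
  set Q : ℕ → Prop := fun j => ∃ t, D t = false ∧ j = 2 ^ s * t + 1 with hQdef
  have hpos : (0 : ℕ) < 2 ^ s := by positivity
  set x := Nat.nth Z n with hx
  have hZx : Z x := Nat.nth_mem_of_infinite Z_infinite n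
  have hQx : Q (2 ^ s * x + 1) := ⟨x, hZx, rfl⟩
  have hcount : Nat.count Q (2 ^ s * x + 1) = Nat.count Z x := by
    rw [Nat.count_eq_card_filter_range, Nat.count_eq_card_filter_range]
    have himg : (Finset.range (2 ^ s * x + 1)).filter Q =
        Finset.image (fun t => 2 ^ s * t + 1) ((Finset.range x).filter Z) := by
      ext j
      simp only [Finset.mem_filter, Finset.mem_range, Finset.mem_image, hQdef, hZ]
      constructor
      · rintro ⟨hj, t, ht, rfl⟩
        refine ⟨t, ⟨?_, ht⟩, rfl⟩
        have : 2 ^ s * t < 2 ^ s * x := by omega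
        exact lt_of_mul_lt_mul_left this (by omega)
      · rintro ⟨t, ⟨htx, ht⟩, rfl⟩
        refine ⟨?_, t, ht, rfl⟩
        have : 2 ^ s * t < 2 ^ s * x := mul_lt_mul_of_pos_left htx hpos
        omega
    rw [himg, Finset.card_image_of_injective _ (fun a b hab => by
      exact Nat.eq_of_mul_eq_mul_left hpos (by omega))]
  have h1 := Nat.nth_count (p := Q) hQx
  rw [hcount, hx, Nat.count_nth_of_infinite Z_infinite n] at h1
  exact h1

end PD


open PD
/-- The gap sequence of `E m 1` is `Θ₁`: for `m ≥ 1` and `p ≥ 1`, the distance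
between the `p`-th and `(p+1)`-th occurrences of `E m 1` is `2^m` when
`Θ₁[p] = a` (so the gap is the single letter `δ_m`) and `2^(m-1)` when
`Θ₁[p] = b` (so consecutive occurrences overlap in `2^(m-1) − 1` letters). -/
theorem doubling_gap_sequence_E1 (m : ℕ) (hm : 1 ≤ m) (p : ℕ) (hp : 1 ≤ p) :
    (Theta1 (p - 1) = false → L (E m 1) (p + 1) - L (E m 1) p = 2 ^ m) ∧
      (Theta1 (p - 1) = true → L (E m 1) (p + 1) - L (E m 1) p = 2 ^ (m - 1)) := by
  obtain ⟨s, rfl⟩ : ∃ s, m = s + 1 := ⟨m - 1, by omega⟩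
  have hQeq : OccursD (E (s + 1) 1) = fun j => ∃ t, D t = false ∧ j = 2 ^ s * t + 1 :=
    funext fun j => propext (occursD_iff s j)
  have hL : ∀ r, L (E (s + 1) 1) r = 2 ^ s * Nat.nth (fun t => D t = false) (r - 1) + 1 := by
    intro r
    rw [L, hQeq, nthQ]
  have hL1 : L (E (s + 1) 1) p = 2 ^ s * Nat.nth (fun t => D t = false) (p - 1) + 1 := hL p
  have hL2 : L (E (s + 1) 1) (p + 1) = 2 ^ s * Nat.nth (fun t => D t = false) p + 1 := by
    rw [hL (p + 1), Nat.add_sub_cancel]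
  have hpq : p = (p - 1) + 1 := by omega
  have h2 : 2 ^ (s + 1) = 2 * 2 ^ s := by rw [pow_succ]; ring
  rw [Nat.add_sub_cancel]
  obtain ⟨j, hj | ⟨hj, hDj⟩⟩ := cIdx_cover (p - 1)
  · cases hDj : D j
    · -- Theta1 (p-1) = false, gap 2^(s+1)
      have hΘ : Theta1 (p - 1) = false := by rw [hj, (theta_c j).1, hDj]
      have hT1 : Nat.nth (fun t => D t = false) (p - 1) = 2 * j := by rw [hj]; exact nthZ_even j
      have hT2 : Nat.nth (fun t => D t = false) p = 2 * (j + 1) := by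
        have : p = cIdx (j + 1) := by rw [cIdx_succ, hDj]; simp; omega
        rw [this]; exact nthZ_even (j + 1)
      constructor
      · intro _
        rw [hL1, hL2, hT1, hT2]
        have e1 : 2 ^ s * (2 * (j + 1)) = 2 ^ s * (2 * j) + 2 * 2 ^ s := by ring
        omega
      · intro h; rw [hΘ] at h; exact absurd h (by simp)
    · -- Theta1 (p-1) = true, gap 2^s
      have hΘ : Theta1 (p - 1) = true := by rw [hj, (theta_c j).1, hDj]
      have hT1 : Nat.nth (fun t => D t = false) (p - 1) = 2 * j := by rw [hj]; exact nthZ_even j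
      have hT2 : Nat.nth (fun t => D t = false) p = 2 * j + 1 := by
        have : p = cIdx j + 1 := by omega
        rw [this]; exact nthZ_odd j hDj
      constructor
      · intro h; rw [hΘ] at h; exact absurd h (by simp)
      · intro _
        rw [hL1, hL2, hT1, hT2]
        have e1 : 2 ^ s * (2 * j + 1) = 2 ^ s * (2 * j) + 2 ^ s := by ring
        omega
  · -- q = cIdx j + 1, D j = true
    have hΘ : Theta1 (p - 1) = true := by rw [hj]; exact (theta_c j).2 hDj
    have hT1 : Nat.nth (fun t => D t = false) (p - 1) = 2 * j + 1 := by
      rw [hj]; exact nthZ_odd j hDj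
    have hT2 : Nat.nth (fun t => D t = false) p = 2 * (j + 1) := by
      have : p = cIdx (j + 1) := by rw [cIdx_succ, hDj]; simp; omega
      rw [this]; exact nthZ_even (j + 1)
    constructor
    · intro h; rw [hΘ] at h; exact absurd h (by simp)
    · intro _
      rw [hL1, hL2, hT1, hT2]
      have e1 : 2 ^ s * (2 * (j + 1)) = 2 ^ s * (2 * j + 1) + 2 ^ s := by ring
      omega
end

section
/- (Powers in the doubling sequence.) Let ω be a nonempty finite word over {a,b}. Then: (1) if ωω is a factor of D∞ then |ω| is a power of 2 (i.e., |ω| = 2^{m−1} for some m ≥ 1); (2) ωω is a factor of D∞ if and only if ωωω is a factor of D∞; (3) ωωωω is never a factor of D∞ (D∞ contains no fourth powers). -/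
open PD
namespace PDaux

lemma subW_cons (x : Bool) (l : List Bool) : subW (x :: l) = sub x ++ subW l :=
  List.flatMap_cons ..

lemma subW_append (l₁ l₂ : List Bool) : subW (l₁ ++ l₂) = subW l₁ ++ subW l₂ :=
  List.flatMap_append ..

lemma sub_length (x : Bool) : (sub x).length = 2 := by cases x <;> rfl

lemma subW_length (l : List Bool) : (subW l).length = 2 * l.length := by
  induction l with
  | nil => rfl
  | cons x l ih => rw [subW_cons, List.length_append, sub_length, ih, List.length_cons]; ring

lemma A_succ (m : ℕ) : A (m + 1) = subW (A m) := Function.iterate_succ_apply' ..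

lemma A_length (m : ℕ) : (A m).length = 2 ^ m := by
  induction m with
  | zero => rfl
  | succ m ih => rw [A_succ, subW_length, ih, pow_succ]; ring

lemma A_prefix (m : ℕ) : A m <+: A (m + 1) := by
  induction m with
  | zero => exact ⟨[true], rfl⟩
  | succ m ih =>
    obtain ⟨t, ht⟩ := ih
    refine ⟨subW t, ?_⟩
    rw [A_succ (m+1), ← ht, subW_append, ← A_succ, ht]

lemma A_prefix_le {m m' : ℕ} (h : m ≤ m') : A m <+: A m' := by
  induction m' with
  | zero => rw [Nat.le_zero.mp h]
  | succ m' ih =>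
    rcases Nat.lt_or_ge m (m' + 1) with h' | h'
    · exact (ih (by omega)).trans (A_prefix m')
    · rw [show m = m' + 1 by omega]

lemma getD_prefix {l l' : List Bool} (h : l <+: l') {k : ℕ} (hk : k < l.length) :
    l'.getD k false = l.getD k false := by
  obtain ⟨t, rfl⟩ := h
  exact List.getD_append _ _ _ _ hk

lemma D_eq (m k : ℕ) (h : k < 2 ^ m) : (A m).getD k false = D k := by
  unfold D
  rcases Nat.le_total m (k + 1) with h' | h'
  · exact (getD_prefix (A_prefix_le h') (by rw [A_length]; exact h)).symm
  · exact getD_prefix (A_prefix_le h') (by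
      rw [A_length]
      exact (Nat.lt_two_pow_self (n := k)).trans_le (Nat.pow_le_pow_right (by norm_num) (by omega)))

lemma subW_getD_even : ∀ (l : List Bool) (k : ℕ), k < l.length →
    (subW l).getD (2 * k) false = false
  | [], k, h => absurd h (by simp)
  | x :: l, 0, _ => by cases x <;> rfl
  | x :: l, k + 1, h => by
    have h2 : 2 * (k + 1) = (2 * k) + 1 + 1 := by ring
    rw [subW_cons, h2]
    cases x <;> simp only [sub, List.cons_append, List.getD_cons_succ, List.nil_append]
      <;> exact subW_getD_even l k (by simpa using h)

lemma subW_getD_odd : ∀ (l : List Bool) (k : ℕ), k < l.length →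
    (subW l).getD (2 * k + 1) false = !(l.getD k false)
  | [], k, h => absurd h (by simp)
  | x :: l, 0, _ => by cases x <;> rfl
  | x :: l, k + 1, h => by
    have h2 : 2 * (k + 1) + 1 = (2 * k + 1) + 1 + 1 := by ring
    rw [subW_cons, h2]
    cases x <;> simp only [sub, List.cons_append, List.getD_cons_succ, List.nil_append]
      <;> exact subW_getD_odd l k (by simpa using h)

lemma D_even (k : ℕ) : D (2 * k) = false := by
  have h1 : k < (A (2 * k)).length := by
    rw [A_length]
    exact (Nat.lt_two_pow_self (n := k)).trans_le (Nat.pow_le_pow_right (by norm_num) (by omega))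
  have := subW_getD_even (A (2 * k)) k h1
  rw [← A_succ] at this
  rw [← D_eq (2 * k + 1) (2 * k) (by
    exact (Nat.lt_two_pow_self).trans_le (Nat.pow_le_pow_right (by norm_num) (by omega)))]
  exact this

lemma D_odd (k : ℕ) : D (2 * k + 1) = !(D k) := by
  have h1 : k < (A (2 * k + 1)).length := by
    rw [A_length]
    exact (Nat.lt_two_pow_self (n := k)).trans_le (Nat.pow_le_pow_right (by norm_num) (by omega))
  have := subW_getD_odd (A (2 * k + 1)) k h1
  rw [← A_succ] at this
  rw [← D_eq (2 * k + 2) (2 * k + 1) (by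
    exact (Nat.lt_two_pow_self).trans_le (Nat.pow_le_pow_right (by norm_num) (by omega)))]
  rw [this, D_eq (2 * k + 1) k ((Nat.lt_two_pow_self (n := k)).trans_le
    (Nat.pow_le_pow_right (by norm_num) (by omega)))]


lemma no_tt (t : ℕ) : ¬(D t = true ∧ D (t + 1) = true) := by
  rintro ⟨h1, h2⟩
  rcases Nat.even_or_odd t with ⟨r, rfl⟩ | ⟨r, rfl⟩
  · rw [show r + r = 2 * r by ring, D_even] at h1; exact Bool.noConfusion h1
  · rw [show 2 * r + 1 + 1 = 2 * (r + 1) by ring, D_even] at h2; exact Bool.noConfusion h2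

lemma no_ffff (j : ℕ) :
    ¬(D j = false ∧ D (j + 1) = false ∧ D (j + 2) = false ∧ D (j + 3) = false) := by
  rintro ⟨h0, h1, h2, h3⟩
  rcases Nat.even_or_odd j with ⟨r, rfl⟩ | ⟨r, rfl⟩
  · rw [show r + r + 1 = 2 * r + 1 by ring, D_odd] at h1
    rw [show r + r + 3 = 2 * (r + 1) + 1 by ring, D_odd] at h3
    exact no_tt r ⟨by simpa using h1, by simpa using h3⟩
  · rw [D_odd] at h0
    rw [show 2 * r + 1 + 2 = 2 * (r + 1) + 1 by ring, D_odd] at h2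
    exact no_tt r ⟨by simpa using h0, by simpa using h2⟩

/-- `D` is `n`-periodic on the window `[i, i+m+n)`. -/
def Per (i n m : ℕ) : Prop := ∀ k < m, D (i + k) = D (i + k + n)

lemma per_mono {i n m m' : ℕ} (h : Per i n m) (hm : m' ≤ m) : Per i n m' :=
  fun k hk => h k (lt_of_lt_of_le hk hm)

lemma D_true_odd {j : ℕ} (h : D j = true) : j % 2 = 1 := by
  rcases Nat.even_or_odd j with ⟨r, rfl⟩ | ⟨r, rfl⟩
  · rw [show r + r = 2 * r by ring, D_even] at h; exact Bool.noConfusion h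
  · omega

lemma per_odd {n : ℕ} (hodd : n % 2 = 1) (h3 : 3 ≤ n) (i : ℕ) : ¬ Per i n n := by
  intro h
  have hall : ∀ k < 2 * n, D (i + k) = false := by
    intro k hk
    rcases Nat.lt_or_ge k n with hk' | hk'
    · by_contra hne
      have ht : D (i + k) = true := by revert hne; cases D (i + k) <;> simp
      have ht2 : D (i + k + n) = true := by rw [← h k hk']; exact ht
      have := D_true_odd ht
      have := D_true_odd ht2
      omega
    · have := h (k - n) (by omega)
      rw [show i + (k - n) + n = i + k by omega] at this
      rw [← this]
      by_contra hne
      have ht : D (i + (k - n)) = true := by revert hne; cases D (i + (k - n)) <;> simp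
      have ht2 : D (i + k) = true := by rw [← this]; exact ht
      have := D_true_odd ht
      have := D_true_odd ht2
      omega
  exact no_ffff i ⟨hall 0 (by omega), hall 1 (by omega), hall 2 (by omega), hall 3 (by omega)⟩

lemma per_shift {n r L : ℕ} (hn : n % 2 = 0) (h : Per (2 * r + 1) n L) : Per (2 * r) n L := by
  intro k hk
  rcases Nat.eq_zero_or_pos k with rfl | hk0
  · rw [show 2 * r + 0 = 2 * r by ring, D_even,
      show 2 * r + n = 2 * (r + n / 2) by omega, D_even]
  · have := h (k - 1) (by omega)
    rw [show 2 * r + 1 + (k - 1) = 2 * r + k by omega] at this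
    exact this

lemma per_half {j m L : ℕ} (h : Per (2 * j) (2 * m) (2 * L)) : Per j m L := by
  intro t ht
  have h1 := D_odd (j + t)
  have h2 := D_odd (j + t + m)
  have h3 := h (2 * t + 1) (by omega)
  rw [show 2 * j + (2 * t + 1) + 2 * m = 2 * (j + t + m) + 1 by ring,
    show 2 * j + (2 * t + 1) = 2 * (j + t) + 1 by ring] at h3
  rw [h1, h2] at h3
  exact Bool.not_inj h3

lemma per_double {j m L : ℕ} (h : Per j m L) : Per (2 * j) (2 * m) (2 * L) := by
  intro k hk
  rcases Nat.even_or_odd k with ⟨t, rfl⟩ | ⟨t, rfl⟩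
  · rw [show 2 * j + (t + t) = 2 * (j + t) by ring, D_even,
      show 2 * (j + t) + 2 * m = 2 * (j + t + m) by ring, D_even]
  · rw [show 2 * j + (2 * t + 1) + 2 * m = 2 * (j + t + m) + 1 by ring, D_odd,
      show 2 * j + (2 * t + 1) = 2 * (j + t) + 1 by ring, D_odd,
      h t (by omega)]


lemma even_start {n L i : ℕ} (hn : n % 2 = 0) (hp : Per i n L) :
    ∃ r, Per (2 * r) n L ∧ (i % 2 = 1 → i = 2 * r + 1) ∧ (i % 2 = 0 → i = 2 * r) := by
  rcases Nat.even_or_odd i with ⟨r, hir⟩ | ⟨r, hir⟩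
  · exact ⟨r, by rw [show 2 * r = i by omega]; exact hp, fun h => by omega, fun _ => by omega⟩
  · subst hir
    exact ⟨r, per_shift hn hp, fun _ => rfl, fun h => by omega⟩

lemma sq_pow : ∀ n, 0 < n → (∃ i, Per i n n) → ∃ t, n = 2 ^ t := by
  intro n
  induction n using Nat.strong_induction_on with
  | _ n ih =>
  rintro hn ⟨i, hp⟩
  rcases Nat.lt_or_ge n 2 with h2 | h2
  · exact ⟨0, by omega⟩
  rcases Nat.even_or_odd n with ⟨m, hm2⟩ | ⟨r, hr⟩
  · have hm : 0 < m := by omega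
    obtain ⟨j, hpj, -, -⟩ := even_start (by omega) hp
    rw [show n = 2 * m by omega] at hpj
    have hhalf : Per j m m := per_half hpj
    obtain ⟨t, ht⟩ := ih m (by omega) hm ⟨j, hhalf⟩
    exact ⟨t + 1, by rw [pow_succ]; omega⟩
  · exact absurd hp (per_odd (by omega) (by omega) i)

lemma no_p4 : ∀ n, 0 < n → ∀ i, ¬ Per i n (3 * n) := by
  intro n
  induction n using Nat.strong_induction_on with
  | _ n ih =>
  intro hn i hp
  rcases Nat.lt_or_ge n 2 with h2 | h2
  · have h1 : n = 1 := by omega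
    subst h1
    have e0 : D i = D (i + 1) := by simpa using hp 0 (by omega)
    have e1 : D (i + 1) = D (i + 2) := hp 1 (by omega)
    have e2 : D (i + 2) = D (i + 3) := hp 2 (by omega)
    cases hD : D i
    · exact no_ffff i ⟨hD, by rw [← e0]; exact hD, by rw [← e1, ← e0]; exact hD,
        by rw [← e2, ← e1, ← e0]; exact hD⟩
    · exact no_tt i ⟨hD, by rw [← e0]; exact hD⟩
  rcases Nat.even_or_odd n with ⟨m, hm2⟩ | ⟨r, hr⟩
  · have hm : 0 < m := by omega
    obtain ⟨j, hpj, -, -⟩ := even_start (by omega) hp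
    rw [show n = 2 * m by omega, show 3 * (2 * m) = 2 * (3 * m) by ring] at hpj
    exact ih m (by omega) hm j (per_half hpj)
  · exact absurd (per_mono hp (by omega)) (per_odd (by omega) (by omega) i)

lemma cube : ∀ n, 0 < n → ∀ i, Per i n n →
    ∃ i', Per i' n (2 * n) ∧ (∀ k < n, D (i' + k) = D (i + k)) := by
  intro n
  induction n using Nat.strong_induction_on with
  | _ n ih =>
  intro hn i hp
  have d0 : D 0 = false := by simpa using D_even 0
  have d1 : D 1 = true := by
    have h := D_odd 0
    rw [show 2 * 0 + 1 = 1 by norm_num, d0] at h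
    simpa using h
  have d2 : D 2 = false := by simpa using D_even 1
  have d3 : D 3 = false := by
    have h := D_odd 1
    rw [show 2 * 1 + 1 = 3 by norm_num, d1] at h
    simpa using h
  have d4 : D 4 = false := by simpa using D_even 2
  rcases Nat.lt_or_ge n 2 with h2 | h2
  · have h1 : n = 1 := by omega
    subst h1
    have e0 : D i = D (i + 1) := by simpa using hp 0 (by omega)
    have hDi : D i = false := by
      cases hD : D i
      · rfl
      · exact absurd ⟨hD, by rw [← e0]; exact hD⟩ (no_tt i)
    refine ⟨2, ?_, ?_⟩
    · intro k hk
      interval_cases k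
      · show D (2 + 0) = D (2 + 0 + 1)
        rw [show 2 + 0 = 2 by norm_num, show 2 + 0 + 1 = 3 by norm_num, d2, d3]
      · show D (2 + 1) = D (2 + 1 + 1)
        rw [show (2:ℕ) + 1 = 3 by norm_num, show (2:ℕ) + 1 + 1 = 4 by norm_num, d3, d4]
    · intro k hk
      have hk0 : k = 0 := by omega
      subst hk0
      rw [show 2 + 0 = 2 by norm_num, Nat.add_zero, d2, hDi]
  rcases Nat.even_or_odd n with ⟨m, hm2⟩ | ⟨r, hr⟩
  · have hm : 0 < m := by omega
    have hne : n = 2 * m := by omega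
    -- core construction for even starting positions
    have core : ∀ j, Per (2 * j) n n →
        ∃ j', Per (2 * j') n (2 * n) ∧ (∀ k < n, D (2 * j' + k) = D (2 * j + k)) := by
      intro j hpj
      rw [hne] at hpj
      obtain ⟨j', hpj', hw⟩ := ih m (by omega) hm j (per_half hpj)
      have hlift := per_double hpj'
      rw [← hne] at hlift
      refine ⟨j', hlift, ?_⟩
      intro k hk
      rcases Nat.even_or_odd k with ⟨t, ht⟩ | ⟨t, ht⟩
      · subst ht
        rw [show 2 * j' + (t + t) = 2 * (j' + t) by ring, D_even,
          show 2 * j + (t + t) = 2 * (j + t) by ring, D_even]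
      · subst ht
        rw [show 2 * j' + (2 * t + 1) = 2 * (j' + t) + 1 by ring, D_odd,
          show 2 * j + (2 * t + 1) = 2 * (j + t) + 1 by ring, D_odd,
          hw t (by omega)]
    obtain ⟨r, hpr, hodd1, hodd0⟩ := even_start (by omega) hp
    obtain ⟨j', hpj', hw⟩ := core r hpr
    rcases Nat.even_or_odd i with ⟨s, hs⟩ | ⟨s, hs⟩
    · -- i even: i = 2r
      have hi2 : i = 2 * r := hodd0 (by omega)
      subst hi2
      exact ⟨2 * j', hpj', hw⟩
    · -- i odd: i = 2r+1
      have hi2 : i = 2 * r + 1 := hodd1 (by omega)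
      subst hi2
      refine ⟨2 * j' + 1, ?_, ?_⟩
      · intro k hk
        rcases Nat.lt_or_ge k (2 * n - 1) with hk' | hk'
        · have := hpj' (k + 1) (by omega)
          rw [show 2 * j' + (k + 1) = 2 * j' + 1 + k by ring] at this
          exact this
        · have hk2 : k = 2 * n - 1 := by omega
          subst hk2
          rw [show 2 * j' + 1 + (2 * n - 1) + n = 2 * (j' + m + m + m) by omega, D_even,
            show 2 * j' + 1 + (2 * n - 1) = 2 * (j' + m + m) by omega, D_even]
      · intro k hk
        rcases Nat.lt_or_ge k (n - 1) with hk' | hk'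
        · have := hw (k + 1) (by omega)
          rw [show 2 * j' + (k + 1) = 2 * j' + 1 + k by ring,
            show 2 * r + (k + 1) = 2 * r + 1 + k by ring] at this
          exact this
        · have hk2 : k = n - 1 := by omega
          subst hk2
          have h1 := hpj' 0 (by omega)
          have h2 := hw 0 (by omega)
          have h3 := hpr 0 (by omega)
          rw [show 2 * j' + 1 + (n - 1) = 2 * j' + 0 + n by omega, ← h1, h2, h3,
            show 2 * r + 0 + n = 2 * r + 1 + (n - 1) by omega]
  · exfalso
    exact per_odd (by omega) (by omega) i hp

-- Bridge lemmas between `FactorD` and `Per`.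

lemma getD2 (w : List Bool) (k : ℕ) (hk : k < 2 * w.length) :
    (w ++ w).getD k false = w.getD (k % w.length) false := by
  rcases Nat.lt_or_ge k w.length with h | h
  · rw [List.getD_append _ _ _ _ h, Nat.mod_eq_of_lt h]
  · rw [List.getD_append_right _ _ _ _ h, Nat.mod_eq_sub_mod h,
      Nat.mod_eq_of_lt (by omega)]

lemma getD3 (w : List Bool) (k : ℕ) (hk : k < 3 * w.length) :
    (w ++ w ++ w).getD k false = w.getD (k % w.length) false := by
  rcases Nat.lt_or_ge k (2 * w.length) with h | h
  · rw [List.getD_append _ _ _ _ (by rw [List.length_append]; omega), getD2 w k h]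
  · rw [List.getD_append_right _ _ _ _ (by rw [List.length_append]; omega)]
    rw [List.length_append]
    have hlen : 0 < w.length := by omega
    rw [Nat.mod_eq_sub_mod (by omega : k ≥ w.length),
      Nat.mod_eq_sub_mod (by omega : k - w.length ≥ w.length),
      Nat.mod_eq_of_lt (by omega), show k - (w.length + w.length) = k - w.length - w.length by omega]

lemma getD4 (w : List Bool) (k : ℕ) (hk : k < 4 * w.length) :
    (w ++ w ++ w ++ w).getD k false = w.getD (k % w.length) false := by
  rcases Nat.lt_or_ge k (3 * w.length) with h | h
  · rw [List.getD_append _ _ _ _ (by simp [List.length_append]; omega), getD3 w k h]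
  · rw [List.getD_append_right _ _ _ _ (by simp [List.length_append]; omega)]
    simp only [List.length_append]
    have hlen : 0 < w.length := by omega
    rw [Nat.mod_eq_sub_mod (by omega : k ≥ w.length),
      Nat.mod_eq_sub_mod (by omega : k - w.length ≥ w.length),
      Nat.mod_eq_sub_mod (by omega : k - w.length - w.length ≥ w.length),
      Nat.mod_eq_of_lt (by omega),
      show k - (w.length + w.length + w.length) = k - w.length - w.length - w.length by omega]

lemma sq_of_factor {w : List Bool} (hn : 0 < w.length) (hf : FactorD (w ++ w)) :
    ∃ i, Per i w.length w.length ∧ ∀ k < w.length, D (i + k) = w.getD k false := by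
  obtain ⟨j, hj1, hj2⟩ := hf
  rw [List.length_append] at hj2
  refine ⟨j - 1, ?_, ?_⟩
  · intro k hk
    have h1 := hj2 k (by omega)
    have h2 := hj2 (k + w.length) (by omega)
    rw [getD2 w k (by omega), Nat.mod_eq_of_lt hk] at h1
    rw [getD2 w (k + w.length) (by omega), Nat.add_mod_right, Nat.mod_eq_of_lt hk,
      show j - 1 + (k + w.length) = j - 1 + k + w.length by omega] at h2
    rw [h1, h2]
  · intro k hk
    have h1 := hj2 k (by omega)
    rw [getD2 w k (by omega), Nat.mod_eq_of_lt hk] at h1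
    exact h1

lemma p4_of_factor {w : List Bool} (hn : 0 < w.length) (hf : FactorD (w ++ w ++ w ++ w)) :
    ∃ i, Per i w.length (3 * w.length) := by
  obtain ⟨j, hj1, hj2⟩ := hf
  simp only [List.length_append] at hj2
  refine ⟨j - 1, ?_⟩
  intro k hk
  have h1 := hj2 k (by omega)
  have h2 := hj2 (k + w.length) (by omega)
  rw [getD4 w k (by omega)] at h1
  rw [getD4 w (k + w.length) (by omega), Nat.add_mod_right,
    show j - 1 + (k + w.length) = j - 1 + k + w.length by omega] at h2
  rw [h1, h2]

lemma cube_occ {w : List Bool} (hn : 0 < w.length) {i : ℕ}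
    (hper : Per i w.length (2 * w.length)) (hword : ∀ k < w.length, D (i + k) = w.getD k false) :
    FactorD (w ++ w ++ w) := by
  have C : ∀ k, k < 3 * w.length → D (i + k) = w.getD (k % w.length) false := by
    intro k
    induction k using Nat.strong_induction_on with
    | _ k ihk =>
    intro hk
    rcases Nat.lt_or_ge k w.length with h | h
    · rw [Nat.mod_eq_of_lt h]; exact hword k h
    · have hh := hper (k - w.length) (by omega)
      rw [show i + (k - w.length) + w.length = i + k by omega] at hh
      rw [← hh, ihk (k - w.length) (by omega) (by omega), Nat.mod_eq_sub_mod h]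
  refine ⟨i + 1, by omega, ?_⟩
  intro k hk
  simp only [List.length_append] at hk
  rw [show i + 1 - 1 = i by omega, getD3 w k (by omega)]
  exact C k (by omega)

lemma sq_of_cube_factor {w : List Bool} (hn : 0 < w.length) (hf : FactorD (w ++ w ++ w)) :
    FactorD (w ++ w) := by
  obtain ⟨j, hj1, hj2⟩ := hf
  simp only [List.length_append] at hj2
  refine ⟨j, hj1, ?_⟩
  intro k hk
  rw [List.length_append] at hk
  rw [getD2 w k (by omega)]
  have := hj2 k (by omega)
  rw [getD3 w k (by omega)] at this
  exact this

end PDaux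

/-- Powers in the doubling sequence: for every nonempty word `w`, (1) if `ww` is a
factor of `D∞` then `|w|` is a power of `2`; (2) `ww` is a factor of `D∞` iff
`www` is; (3) `wwww` is never a factor of `D∞`. -/
theorem doubling_powers (w : List Bool) (hw : w ≠ []) :
    (FactorD (w ++ w) → ∃ k : ℕ, w.length = 2 ^ k) ∧
      (FactorD (w ++ w) ↔ FactorD (w ++ w ++ w)) ∧
      ¬ FactorD (w ++ w ++ w ++ w) := by
  have hn : 0 < w.length := List.length_pos_iff.mpr hw
  refine ⟨?_, ⟨?_, ?_⟩, ?_⟩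
  · intro hf
    obtain ⟨i, hper, -⟩ := PDaux.sq_of_factor hn hf
    exact PDaux.sq_pow w.length hn ⟨i, hper⟩
  · intro hf
    obtain ⟨i, hper, hword⟩ := PDaux.sq_of_factor hn hf
    obtain ⟨i', hp2, hmatch⟩ := PDaux.cube w.length hn i hper
    exact PDaux.cube_occ hn hp2 (fun k hk => (hmatch k hk).trans (hword k hk))
  · exact PDaux.sq_of_cube_factor hn
  · intro hf
    obtain ⟨i, hper⟩ := PDaux.p4_of_factor hn hf
    exact PDaux.no_p4 w.length hn i hper
end
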